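/- arXiv:1404.1912 — 3 statements merged into one kernel-verified Lean document; each statement's English description precedes it below -/
import Mathlib

section
/- The range of the function (θ₁,θ₂) ↦ 2 + 2cos(4πθ₁) + 2cos(4πθ₂) + 2cos(2π(θ₁+θ₂)) + 2cos(2π(θ₁−θ₂)) on [0,1]² is the interval [−2,10]. -/
open Real

theorem range_chi_z :
    (fun p : ℝ × ℝ =>
        2 + 2 * Real.cos (4 * π * p.1) + 2 * Real.cos (4 * π * p.2)
          + 2 * Real.cos (2 * π * (p.1 + p.2)) + 2 * Real.cos (2 * π * (p.1 - p.2))) ''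
        (Set.Icc 0 1 ×ˢ Set.Icc 0 1) = Set.Icc (-2) 10 := by
  set f : ℝ × ℝ → ℝ := fun p =>
        2 + 2 * Real.cos (4 * π * p.1) + 2 * Real.cos (4 * π * p.2)
          + 2 * Real.cos (2 * π * (p.1 + p.2)) + 2 * Real.cos (2 * π * (p.1 - p.2)) with hf
  apply Set.Subset.antisymm
  · rintro x ⟨p, -, rfl⟩
    have h1 : (4 : ℝ) * π * p.1 = 2 * (2 * π * p.1) := by ring
    have h2 : (4 : ℝ) * π * p.2 = 2 * (2 * π * p.2) := by ring
    have h3 : (2 : ℝ) * π * (p.1 + p.2) = 2 * π * p.1 + 2 * π * p.2 := by ring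
    have h4 : (2 : ℝ) * π * (p.1 - p.2) = 2 * π * p.1 - 2 * π * p.2 := by ring
    have e : f p = -2 + 4 * ((Real.cos (2 * π * p.1))^2 + Real.cos (2 * π * p.1) *
        Real.cos (2 * π * p.2) + (Real.cos (2 * π * p.2))^2) := by
      simp only [hf, h1, h2, h3, h4, Real.cos_two_mul, Real.cos_add, Real.cos_sub]
      ring
    set x := Real.cos (2 * π * p.1)
    set y := Real.cos (2 * π * p.2)
    have hx1 : -1 ≤ x := Real.neg_one_le_cos _
    have hx2 : x ≤ 1 := Real.cos_le_one _
    have hy1 : -1 ≤ y := Real.neg_one_le_cos _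
    have hy2 : y ≤ 1 := Real.cos_le_one _
    rw [e]
    constructor
    · nlinarith [sq_nonneg (x + y), sq_nonneg x, sq_nonneg y]
    · nlinarith [sq_nonneg (x - y), sq_nonneg (x + y)]
  · have hcont : Continuous f := by fun_prop
    have hconn : IsPreconnected (f '' (Set.Icc 0 1 ×ˢ Set.Icc 0 1)) :=
      ((isPreconnected_Icc.prod isPreconnected_Icc)).image f hcont.continuousOn
    have h10 : (10 : ℝ) ∈ f '' (Set.Icc (0:ℝ) 1 ×ˢ Set.Icc (0:ℝ) 1) := by
      refine ⟨(0, 0), by norm_num, ?_⟩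
      simp [hf]
      norm_num
    have hm2 : (-2 : ℝ) ∈ f '' (Set.Icc (0:ℝ) 1 ×ˢ Set.Icc (0:ℝ) 1) := by
      refine ⟨(1/4, 1/4), by norm_num [Prod.le_def], ?_⟩
      have e1 : (4 : ℝ) * π * (1/4 : ℝ) = π := by ring
      have e2 : (2 : ℝ) * π * ((1/4 : ℝ) + 1/4) = π := by ring
      have e3 : (2 : ℝ) * π * ((1/4 : ℝ) - 1/4) = 0 := by ring
      simp only [hf, e1, e2, e3, Real.cos_pi, Real.cos_zero]
      norm_num
    exact hconn.Icc_subset hm2 h10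
end

section
/- For all θ₁, θ₂ ∈ ℝ, J_{y,z}(θ₁,θ₂)² = 64π⁴(z−3y+5)(z+y+1)(y²+2y+5−4z), where y = 1 + 2cos(2π(θ₁+θ₂)) + 2cos(2π(θ₁−θ₂)), z = 2 + 2cos(4πθ₁) + 2cos(4πθ₂) + 2cos(2π(θ₁+θ₂)) + 2cos(2π(θ₁−θ₂)), and J_{y,z}(θ₁,θ₂) = 16π²(cos(2π(θ₁−3θ₂)) + cos(2π(3θ₁+θ₂)) − cos(2π(θ₁+3θ₂)) − cos(2π(3θ₁−θ₂))). -/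
open Real

lemma jac_helper (a b : ℝ) :
    (16 * π ^ 2 * (Real.cos (a - 3 * b) + Real.cos (3 * a + b)
        - Real.cos (a + 3 * b) - Real.cos (3 * a - b))) ^ 2
      = 64 * π ^ 4
          * ((2 + 2 * Real.cos (2 * a) + 2 * Real.cos (2 * b)
                + 2 * Real.cos (a + b) + 2 * Real.cos (a - b))
              - 3 * (1 + 2 * Real.cos (a + b) + 2 * Real.cos (a - b)) + 5)
          * ((2 + 2 * Real.cos (2 * a) + 2 * Real.cos (2 * b)
                + 2 * Real.cos (a + b) + 2 * Real.cos (a - b))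
              + (1 + 2 * Real.cos (a + b) + 2 * Real.cos (a - b)) + 1)
          * ((1 + 2 * Real.cos (a + b) + 2 * Real.cos (a - b)) ^ 2
              + 2 * (1 + 2 * Real.cos (a + b) + 2 * Real.cos (a - b)) + 5
              - 4 * (2 + 2 * Real.cos (2 * a) + 2 * Real.cos (2 * b)
                  + 2 * Real.cos (a + b) + 2 * Real.cos (a - b))) := by
  have h1 := Real.sin_sq_add_cos_sq a
  have h2 := Real.sin_sq_add_cos_sq b
  have e1 : a - 3 * b = a - 3 * b := rfl
  simp only [show (3:ℝ) * a + b = 3 * a + b from rfl,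
    Real.cos_sub, Real.cos_add, Real.cos_two_mul, Real.cos_three_mul, Real.sin_three_mul]
  linear_combination
    (256 * π ^ 4 * ((64) * Real.sin b ^ 2 + (-128) * Real.sin b ^ 4 + (64) * Real.sin b ^ 6 + (-128) * Real.cos a ^ 2 * Real.sin b ^ 2 + (128) * Real.cos a ^ 2 * Real.sin b ^ 4 + (64) * Real.cos a ^ 4 * Real.sin b ^ 2 + (64) * Real.sin a ^ 2 * Real.sin b ^ 2 + (-128) * Real.sin a ^ 2 * Real.sin b ^ 4 + (-64) * Real.sin a ^ 2 * Real.cos a ^ 2 * Real.sin b ^ 2 + (64) * Real.sin a ^ 4 * Real.sin b ^ 2)) * h1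
    + (256 * π ^ 4 * ((64) * Real.cos b ^ 4 + (-64) * Real.sin b ^ 2 + (-64) * Real.sin b ^ 2 * Real.cos b ^ 2 + (64) * Real.sin b ^ 4 + (-128) * Real.cos a ^ 2 * Real.cos b ^ 2 + (-64) * Real.cos a ^ 2 * Real.cos b ^ 4 + (192) * Real.cos a ^ 2 * Real.sin b ^ 2 + (64) * Real.cos a ^ 2 * Real.sin b ^ 2 * Real.cos b ^ 2 + (-64) * Real.cos a ^ 2 * Real.sin b ^ 4 + (64) * Real.cos a ^ 4 + (128) * Real.cos a ^ 4 * Real.cos b ^ 2 + (-128) * Real.cos a ^ 4 * Real.sin b ^ 2 + (-64) * Real.cos a ^ 6)) * h2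

theorem jacobian_yz_sq_factorization (θ₁ θ₂ : ℝ) :
    (16 * π ^ 2 * (Real.cos (2 * π * (θ₁ - 3 * θ₂)) + Real.cos (2 * π * (3 * θ₁ + θ₂))
        - Real.cos (2 * π * (θ₁ + 3 * θ₂)) - Real.cos (2 * π * (3 * θ₁ - θ₂)))) ^ 2
      = 64 * π ^ 4
          * ((2 + 2 * Real.cos (4 * π * θ₁) + 2 * Real.cos (4 * π * θ₂)
                + 2 * Real.cos (2 * π * (θ₁ + θ₂)) + 2 * Real.cos (2 * π * (θ₁ - θ₂)))
              - 3 * (1 + 2 * Real.cos (2 * π * (θ₁ + θ₂)) + 2 * Real.cos (2 * π * (θ₁ - θ₂)))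
              + 5)
          * ((2 + 2 * Real.cos (4 * π * θ₁) + 2 * Real.cos (4 * π * θ₂)
                + 2 * Real.cos (2 * π * (θ₁ + θ₂)) + 2 * Real.cos (2 * π * (θ₁ - θ₂)))
              + (1 + 2 * Real.cos (2 * π * (θ₁ + θ₂)) + 2 * Real.cos (2 * π * (θ₁ - θ₂)))
              + 1)
          * ((1 + 2 * Real.cos (2 * π * (θ₁ + θ₂)) + 2 * Real.cos (2 * π * (θ₁ - θ₂))) ^ 2
              + 2 * (1 + 2 * Real.cos (2 * π * (θ₁ + θ₂)) + 2 * Real.cos (2 * π * (θ₁ - θ₂)))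
              + 5
              - 4 * (2 + 2 * Real.cos (4 * π * θ₁) + 2 * Real.cos (4 * π * θ₂)
                  + 2 * Real.cos (2 * π * (θ₁ + θ₂)) + 2 * Real.cos (2 * π * (θ₁ - θ₂)))) := by
  have e1 : 2 * π * (θ₁ - 3 * θ₂) = 2 * π * θ₁ - 3 * (2 * π * θ₂) := by ring
  have e2 : 2 * π * (3 * θ₁ + θ₂) = 3 * (2 * π * θ₁) + 2 * π * θ₂ := by ring
  have e3 : 2 * π * (θ₁ + 3 * θ₂) = 2 * π * θ₁ + 3 * (2 * π * θ₂) := by ring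
  have e4 : 2 * π * (3 * θ₁ - θ₂) = 3 * (2 * π * θ₁) - 2 * π * θ₂ := by ring
  have e5 : 4 * π * θ₁ = 2 * (2 * π * θ₁) := by ring
  have e6 : 4 * π * θ₂ = 2 * (2 * π * θ₂) := by ring
  have e7 : 2 * π * (θ₁ + θ₂) = 2 * π * θ₁ + 2 * π * θ₂ := by ring
  have e8 : 2 * π * (θ₁ - θ₂) = 2 * π * θ₁ - 2 * π * θ₂ := by ring
  rw [e1, e2, e3, e4, e5, e6, e7, e8]
  exact jac_helper (2 * π * θ₁) (2 * π * θ₂)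
end

section
/- The polynomial x⁵ − 11x⁴ + 44x³ − 77x² + 55x − 11 has five distinct real roots b₁ > b₂ > b₃ > b₄ > b₅, all lying in the open interval (0, 11), and their sum is 11. -/
open Polynomial Set

private noncomputable def E8P : ℝ[X] :=
  X ^ 5 - 11 * X ^ 4 + 44 * X ^ 3 - 77 * X ^ 2 + 55 * X - 11

private lemma E8P_eval (x : ℝ) :
    E8P.eval x = x ^ 5 - 11 * x ^ 4 + 44 * x ^ 3 - 77 * x ^ 2 + 55 * x - 11 := by
  simp [E8P]

private lemma E8P_natDegree : E8P.natDegree = 5 := by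
  unfold E8P; compute_degree!

private lemma E8P_monic : E8P.Monic := by
  unfold E8P; monicity!

private lemma ivt_aux {a b : ℝ} (hab : a ≤ b)
    (ha : a ^ 5 - 11 * a ^ 4 + 44 * a ^ 3 - 77 * a ^ 2 + 55 * a - 11 < 0)
    (hb : 0 < b ^ 5 - 11 * b ^ 4 + 44 * b ^ 3 - 77 * b ^ 2 + 55 * b - 11) :
    ∃ x ∈ Ioo a b, x ^ 5 - 11 * x ^ 4 + 44 * x ^ 3 - 77 * x ^ 2 + 55 * x - 11 = 0 := by
  have hc : ContinuousOn (fun x : ℝ => x ^ 5 - 11 * x ^ 4 + 44 * x ^ 3 - 77 * x ^ 2 + 55 * x - 11)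
      (Icc a b) := (by continuity : Continuous _).continuousOn
  have := intermediate_value_Ioo hab hc (by exact ⟨ha, hb⟩ :
    (0:ℝ) ∈ Ioo _ _)
  obtain ⟨x, hx, hfx⟩ := this
  exact ⟨x, hx, hfx⟩

private lemma ivt_aux' {a b : ℝ} (hab : a ≤ b)
    (ha : 0 < a ^ 5 - 11 * a ^ 4 + 44 * a ^ 3 - 77 * a ^ 2 + 55 * a - 11)
    (hb : b ^ 5 - 11 * b ^ 4 + 44 * b ^ 3 - 77 * b ^ 2 + 55 * b - 11 < 0) :
    ∃ x ∈ Ioo a b, x ^ 5 - 11 * x ^ 4 + 44 * x ^ 3 - 77 * x ^ 2 + 55 * x - 11 = 0 := by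
  have hc : ContinuousOn (fun x : ℝ => x ^ 5 - 11 * x ^ 4 + 44 * x ^ 3 - 77 * x ^ 2 + 55 * x - 11)
      (Icc a b) := (by continuity : Continuous _).continuousOn
  have := intermediate_value_Ioo' hab hc (by exact ⟨hb, ha⟩ :
    (0:ℝ) ∈ Ioo _ _)
  obtain ⟨x, hx, hfx⟩ := this
  exact ⟨x, hx, hfx⟩

theorem roots_of_E8_polynomial :
    ∃ b₁ b₂ b₃ b₄ b₅ : ℝ,
      b₁ > b₂ ∧ b₂ > b₃ ∧ b₃ > b₄ ∧ b₄ > b₅ ∧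
      (∀ x ∈ ({b₁, b₂, b₃, b₄, b₅} : Set ℝ),
        x ∈ Set.Ioo (0:ℝ) 11 ∧
          x ^ 5 - 11 * x ^ 4 + 44 * x ^ 3 - 77 * x ^ 2 + 55 * x - 11 = 0) ∧
      b₁ + b₂ + b₃ + b₄ + b₅ = 11 := by
  obtain ⟨b₅, hb₅I, hb₅⟩ := ivt_aux (by norm_num : (0:ℝ) ≤ 1/2) (by norm_num) (by norm_num)
  obtain ⟨b₄, hb₄I, hb₄⟩ := ivt_aux' (by norm_num : (1:ℝ)/2 ≤ 3/2) (by norm_num) (by norm_num)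
  obtain ⟨b₃, hb₃I, hb₃⟩ := ivt_aux (by norm_num : (3:ℝ)/2 ≤ 3) (by norm_num) (by norm_num)
  obtain ⟨b₂, hb₂I, hb₂⟩ := ivt_aux' (by norm_num : (3:ℝ) ≤ 7/2) (by norm_num) (by norm_num)
  obtain ⟨b₁, hb₁I, hb₁⟩ := ivt_aux (by norm_num : (7:ℝ)/2 ≤ 4) (by norm_num) (by norm_num)
  have h12 : b₁ > b₂ := lt_trans hb₂I.2 hb₁I.1
  have h23 : b₂ > b₃ := lt_trans hb₃I.2 hb₂I.1
  have h34 : b₃ > b₄ := lt_trans hb₄I.2 hb₃I.1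
  have h45 : b₄ > b₅ := lt_trans hb₅I.2 hb₄I.1
  refine ⟨b₁, b₂, b₃, b₄, b₅, h12, h23, h34, h45, ?_, ?_⟩
  · intro x hx
    have hmem : x = b₁ ∨ x = b₂ ∨ x = b₃ ∨ x = b₄ ∨ x = b₅ := by
      simpa using hx
    rcases hmem with rfl | rfl | rfl | rfl | rfl
    · exact ⟨⟨by linarith [hb₅I.1, hb₄I.1], by linarith [hb₁I.2]⟩, hb₁⟩
    · exact ⟨⟨by linarith [hb₅I.1, hb₄I.1], by linarith [hb₂I.2]⟩, hb₂⟩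
    · exact ⟨⟨by linarith [hb₅I.1, hb₄I.1], by linarith [hb₃I.2]⟩, hb₃⟩
    · exact ⟨⟨by linarith [hb₅I.1], by linarith [hb₄I.2]⟩, hb₄⟩
    · exact ⟨⟨hb₅I.1, by linarith [hb₅I.2]⟩, hb₅⟩
  · -- Vieta: the five roots are all the roots of E8P
    have hne : E8P ≠ 0 := E8P_monic.ne_zero
    have hroot : ∀ x : ℝ, x ^ 5 - 11 * x ^ 4 + 44 * x ^ 3 - 77 * x ^ 2 + 55 * x - 11 = 0 →
        x ∈ E8P.roots := by
      intro x hx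
      rw [mem_roots hne, IsRoot, E8P_eval]
      exact hx
    set s : Multiset ℝ := {b₁, b₂, b₃, b₄, b₅} with hs
    have hnodup : s.Nodup := by
      simp only [hs, Multiset.insert_eq_cons, Multiset.nodup_cons, Multiset.mem_cons,
        Multiset.mem_singleton, Multiset.nodup_singleton]
      push_neg
      refine ⟨⟨?_, ?_, ?_, ?_⟩, ⟨?_, ?_, ?_⟩, ⟨?_, ?_⟩, ?_, trivial⟩ <;> intro h <;> linarith
    have hsub : s ⊆ E8P.roots := by
      intro a ha
      simp only [hs, Multiset.insert_eq_cons, Multiset.mem_cons, Multiset.mem_singleton] at ha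
      rcases ha with rfl | rfl | rfl | rfl | rfl
      exacts [hroot _ hb₁, hroot _ hb₂, hroot _ hb₃, hroot _ hb₄, hroot _ hb₅]
    have hle : s ≤ E8P.roots := (Multiset.le_iff_subset hnodup).mpr hsub
    have hcard : Multiset.card E8P.roots ≤ 5 := by
      have := E8P.card_roots' 
      rwa [E8P_natDegree] at this
    have hscard : Multiset.card s = 5 := by simp [hs]
    have heq : s = E8P.roots := Multiset.eq_of_le_of_card_le hle (by omega)
    have hsplits : Splits E8P := by
      rw [splits_iff_card_roots, E8P_natDegree, ← heq, hscard]
    have hsum := hsplits.nextCoeff_eq_neg_sum_roots_of_monic E8P_monic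
    have hnext : E8P.nextCoeff = -11 := by
      rw [Polynomial.nextCoeff, E8P_natDegree]
      norm_num [E8P, coeff_one, coeff_X_pow, coeff_X]
    rw [hnext, ← heq] at hsum
    simp only [hs, Multiset.insert_eq_cons, Multiset.sum_cons, Multiset.sum_singleton] at hsum
    linarith
end
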